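/- Let n ≥ 1, p ∈ (0,1], C ~ Binomial(n-1, p), and conditionally on C, A ~ Binomial(C, 1/2). Define distributions on pairs of natural numbers: P is the law of (A, C-A+1) and Q is the law of (A+1, C-A). Then for any pair (a,b) with a ≥ 1 and b ≥ 1, the likelihood ratio satisfies ℙ(Q=(a,b)) / ℙ(P=(a,b)) = a/b (whenever ℙ(P=(a,b)) > 0). -/
import Mathlib


open Real

/-- Binomial pmf: probability that a `Binomial(N, q)` variable equals `k`. -/
noncomputable def binPMF (N : ℕ) (q : ℝ) (k : ℕ) : ℝ :=
  if k ≤ N then (N.choose k : ℝ) * q ^ k * (1 - q) ^ (N - k) else 0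

/-- `ℙ(P = (a,b))` where `P = (A, C - A + 1)`, `C ~ Bin(n-1,p)`, `A | C ~ Bin(C, 1/2)`:
the event is `C = a + b - 1, A = a`. -/
noncomputable def pmfP (n : ℕ) (p : ℝ) (a b : ℕ) : ℝ :=
  binPMF (n - 1) p (a + b - 1) * binPMF (a + b - 1) (1/2) a

/-- `ℙ(Q = (a,b))` where `Q = (A + 1, C - A)`: the event is `C = a + b - 1, A = a - 1`. -/
noncomputable def pmfQ (n : ℕ) (p : ℝ) (a b : ℕ) : ℝ :=
  binPMF (n - 1) p (a + b - 1) * binPMF (a + b - 1) (1/2) (a - 1)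

theorem likelihood_ratio_shuffle (n : ℕ) (hn : 1 ≤ n) (p : ℝ) (hp : 0 < p) (hp1 : p ≤ 1)
    (a b : ℕ) (ha : 1 ≤ a) (hb : 1 ≤ b) (hpos : 0 < pmfP n p a b) :
    pmfQ n p a b / pmfP n p a b = (a : ℝ) / b := by
  set m := a + b - 1 with hm
  have hab : a - 1 ≤ m := by omega
  have hab2 : a ≤ m := by omega
  have h1 : binPMF (n - 1) p m ≠ 0 := by
    intro h; rw [pmfP, ← hm, h, zero_mul] at hpos; exact lt_irrefl _ hpos
  rw [pmfQ, pmfP, ← hm, mul_div_mul_left _ _ h1]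
  rw [binPMF, binPMF, if_pos hab, if_pos hab2]
  have h12 : (1 : ℝ) - 1/2 = 1/2 := by norm_num
  rw [h12]
  have ht : ((1 : ℝ)/2) ^ m ≠ 0 := by positivity
  have e1 : (m.choose (a-1) : ℝ) * (1/2)^(a-1) * (1/2)^(m-(a-1))
      = m.choose (a-1) * (1/2)^m := by
    rw [mul_assoc, ← pow_add]; congr 2; omega
  have e2 : (m.choose a : ℝ) * (1/2)^a * (1/2)^(m-a)
      = m.choose a * (1/2)^m := by
    rw [mul_assoc, ← pow_add]; congr 2; omega
  rw [e1, e2, mul_div_mul_right _ _ ht]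
  have hc : (m.choose a : ℝ) ≠ 0 := by
    exact_mod_cast (Nat.choose_pos hab2).ne'
  have hbne : (b : ℝ) ≠ 0 := by exact_mod_cast (by omega : b ≠ 0)
  rw [div_eq_div_iff hc hbne]
  have key : m.choose (a-1) * b = a * m.choose a := by
    have h := Nat.choose_succ_right_eq m (a-1)
    have ha1 : a - 1 + 1 = a := by omega
    have hmb : m - (a-1) = b := by omega
    rw [ha1, hmb] at h
    exact h.symm.trans (Nat.mul_comm _ _)
  exact_mod_cast key
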